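/- arXiv:2004.10149 — 2 statements merged into one kernel-verified Lean document; each statement's English description precedes it below -/
import Mathlib

section
/- Let a₁ ∈ ℝ with a₁ ≠ 0, ε ∈ (0,1), T = 1+ε. If (y,x₀) and (ỹ,x̃₀) are two initial states in ℝ × L²(−1,0) with (y,x₀) ≠ (ỹ,x̃₀) (i.e. y ≠ ỹ or x₀ ≠ x̃₀ as elements of L²(−1,0)), then U_T(y,x₀) ∩ U_T(ỹ,x̃₀) = ∅. -/
open MeasureTheory Set

/-- The uncontrolled trajectory `x̃(t) = y + a₁ ∫₀ᵗ x₀(τ-1) dτ`. -/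
noncomputable def xtilde (a₁ y : ℝ) (x₀ : ℝ → ℝ) (t : ℝ) : ℝ :=
  y + a₁ * ∫ τ in (0:ℝ)..t, x₀ (τ - 1)

/-- The solution `x(t; y, x₀, u)` of `ẋ(t) = a₁ x(t-1) + u(t)`. -/
noncomputable def traj (a₁ y : ℝ) (x₀ u : ℝ → ℝ) (t : ℝ) : ℝ :=
  if t < 0 then x₀ t
  else if t ≤ 1 then xtilde a₁ y x₀ t + ∫ τ in (0:ℝ)..t, u τ
  else (xtilde a₁ y x₀ 1 + ∫ τ in (0:ℝ)..1, u τ)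
    + a₁ * ∫ s in (1:ℝ)..t, (xtilde a₁ y x₀ (s - 1) + ∫ τ in (0:ℝ)..(s - 1), u τ)
    + ∫ s in (1:ℝ)..t, u s

/-- The set `U_T(y,x₀)` of admissible controls at time `T = 1+ε`. -/
def admissibleSet (a₁ ε y : ℝ) (x₀ : ℝ → ℝ) : Set (ℝ → ℝ) :=
  {u | MemLp u 2 (volume.restrict (Set.Ioo (0:ℝ) (1 + ε))) ∧
    ∀ t ∈ Set.Icc ε (1 + ε), traj a₁ y x₀ u t = 0}

open scoped ENNReal Topology
open Filter

lemma ae_zero_of_forall_Ioc (g : ℝ → ℝ) (μ : Measure ℝ) [IsFiniteMeasure μ]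
    (hg : Integrable g μ)
    (h : ∀ a b : ℝ, a < b → ∫ x in Ioc a b, g x ∂μ = 0) (h0 : ∫ x, g x ∂μ = 0) :
    g =ᵐ[μ] 0 := by
  have hmeas : AEMeasurable (fun x => ENNReal.ofReal (g x)) μ :=
    ENNReal.measurable_ofReal.comp_aemeasurable hg.aestronglyMeasurable.aemeasurable
  have hmeas' : AEMeasurable (fun x => ENNReal.ofReal (-g x)) μ :=
    ENNReal.measurable_ofReal.comp_aemeasurable hg.neg.aestronglyMeasurable.aemeasurable
  have hfin1 : IsFiniteMeasure (μ.withDensity fun x => ENNReal.ofReal (g x)) :=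
    isFiniteMeasure_withDensity_ofReal hg.hasFiniteIntegral
  have hfin2 : IsFiniteMeasure (μ.withDensity fun x => ENNReal.ofReal (-g x)) :=
    isFiniteMeasure_withDensity_ofReal hg.neg.hasFiniteIntegral
  have hlt1 : ∫⁻ x, ENNReal.ofReal (g x) ∂μ ≠ ∞ := by
    have := measure_lt_top (μ.withDensity fun x => ENNReal.ofReal (g x)) univ
    rwa [withDensity_apply _ MeasurableSet.univ, setLIntegral_univ, lt_top_iff_ne_top] at this
  have key : ∀ s : Set ℝ, MeasurableSet s → ∫ x in s, g x ∂μ = 0 →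
      ∫⁻ x in s, ENNReal.ofReal (g x) ∂μ = ∫⁻ x in s, ENNReal.ofReal (-g x) ∂μ := by
    intro s hs hint
    have hgi : Integrable g (μ.restrict s) := hg.restrict
    have := integral_eq_lintegral_pos_part_sub_lintegral_neg_part hgi
    rw [hint] at this
    have h1 : ∫⁻ x, ENNReal.ofReal (g x) ∂μ.restrict s ≠ ∞ := by
      refine ne_of_lt (lt_of_le_of_lt (lintegral_mono_set (subset_univ s)) ?_)
      · rw [Measure.restrict_univ]; exact lt_top_iff_ne_top.2 hlt1
    have h2 : ∫⁻ x, ENNReal.ofReal (-g x) ∂μ.restrict s ≠ ∞ := by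
      have := measure_lt_top (μ.withDensity fun x => ENNReal.ofReal (-g x)) univ
      rw [withDensity_apply _ MeasurableSet.univ, setLIntegral_univ, lt_top_iff_ne_top] at this
      refine ne_of_lt (lt_of_le_of_lt (lintegral_mono_set (subset_univ s)) ?_)
      rw [Measure.restrict_univ]; exact lt_top_iff_ne_top.2 this
    have := sub_eq_zero.1 this.symm
    exact (ENNReal.toReal_eq_toReal_iff' h1 h2).1 this
  have hdens : μ.withDensity (fun x => ENNReal.ofReal (g x))
      = μ.withDensity (fun x => ENNReal.ofReal (-g x)) := by
    refine Measure.ext_of_Ioc_finite _ _ ?_ ?_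
    · rw [withDensity_apply _ MeasurableSet.univ, withDensity_apply _ MeasurableSet.univ,
        setLIntegral_univ, setLIntegral_univ]
      have := key univ MeasurableSet.univ (by simpa using h0)
      simpa using this
    · intro a b hab
      rw [withDensity_apply _ measurableSet_Ioc, withDensity_apply _ measurableSet_Ioc]
      exact key _ measurableSet_Ioc (h a b hab)
  have := (withDensity_eq_iff hmeas hmeas' hlt1).1 hdens
  filter_upwards [this] with x hx
  simp only [Pi.zero_apply]
  rcases le_or_gt (g x) 0 with h1 | h1
  · have e1 : ENNReal.ofReal (g x) = 0 := ENNReal.ofReal_eq_zero.2 h1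
    have e2 := ENNReal.ofReal_eq_zero.1 (hx.symm.trans e1)
    linarith
  · have e1 : ENNReal.ofReal (-g x) = 0 := ENNReal.ofReal_eq_zero.2 (by linarith)
    have e2 := ENNReal.ofReal_eq_zero.1 (hx.trans e1)
    linarith

lemma shiftMap : Measure.map (fun τ : ℝ => τ - 1) (volume.restrict (Ioo (0:ℝ) 1))
    = volume.restrict (Ioo (-1:ℝ) 0) := by
  have hemb : MeasurableEmbedding (fun τ : ℝ => τ - 1) :=
    (MeasurableEquiv.subRight (1:ℝ)).measurableEmbedding
  have h1 : (fun τ : ℝ => τ - 1) ⁻¹' (Ioo (-1:ℝ) 0) = Ioo 0 1 := by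
    ext x
    simp only [mem_preimage, mem_Ioo]
    constructor <;> rintro ⟨h1, h2⟩ <;> constructor <;> linarith
  rw [← h1, ← hemb.restrict_map]
  congr 1
  have h2 : (fun τ : ℝ => τ - 1) = (fun τ : ℝ => τ + (-1)) := by funext τ; ring
  rw [h2, map_add_right_eq_self]


/-- for `a₁ ≠ 0`, different initial states (as elements of
`ℝ × L²(-1,0)`) have disjoint sets of admissible controls. -/
theorem admissibleSet_disjoint
    (a₁ ε : ℝ) (ha₁ : a₁ ≠ 0) (hε : ε ∈ Set.Ioo (0:ℝ) 1)
    (y ytilde : ℝ) (x₀ x₀tilde : ℝ → ℝ)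
    (hx₀ : MemLp x₀ 2 (volume.restrict (Set.Ioo (-1:ℝ) 0)))
    (hx₀tilde : MemLp x₀tilde 2 (volume.restrict (Set.Ioo (-1:ℝ) 0)))
    (hne : y ≠ ytilde ∨ ¬ (x₀ =ᶠ[ae (volume.restrict (Set.Ioo (-1:ℝ) 0))] x₀tilde)) :
    admissibleSet a₁ ε y x₀ ∩ admissibleSet a₁ ε ytilde x₀tilde = ∅ := by
  rw [Set.eq_empty_iff_forall_notMem]
  rintro u ⟨⟨hu, hz⟩, hu', hz'⟩
  obtain ⟨hε0, hε1⟩ := hε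
  haveI hfm1 : IsFiniteMeasure (volume.restrict (Ioo (-1:ℝ) 0)) := by
    constructor
    rw [Measure.restrict_apply_univ, Real.volume_Ioo]
    simp
  haveI hfm2 : IsFiniteMeasure (volume.restrict (Ioo (0:ℝ) (1+ε))) := by
    constructor
    rw [Measure.restrict_apply_univ, Real.volume_Ioo]
    simp
  have hemb : MeasurableEmbedding (fun τ : ℝ => τ - 1) :=
    (MeasurableEquiv.subRight (1:ℝ)).measurableEmbedding
  -- basic integrability
  have hx₀i : IntegrableOn x₀ (Ioo (-1:ℝ) 0) volume := hx₀.integrable one_le_two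
  have hx₀ti : IntegrableOn x₀tilde (Ioo (-1:ℝ) 0) volume := hx₀tilde.integrable one_le_two
  have hXi : IntegrableOn (fun τ => x₀ (τ - 1)) (Ioo (0:ℝ) 1) volume := by
    have h := hx₀i
    rw [IntegrableOn, ← shiftMap, hemb.integrable_map_iff] at h
    exact h
  have hXti : IntegrableOn (fun τ => x₀tilde (τ - 1)) (Ioo (0:ℝ) 1) volume := by
    have h := hx₀ti
    rw [IntegrableOn, ← shiftMap, hemb.integrable_map_iff] at h
    exact h
  set g : ℝ → ℝ := fun τ => x₀ (τ - 1) - x₀tilde (τ - 1) with hgdef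
  have hXic : IntegrableOn (fun τ => x₀ (τ - 1)) (Icc (0:ℝ) 1) volume := by
    rwa [integrableOn_Icc_iff_integrableOn_Ioo]
  have hXtic : IntegrableOn (fun τ => x₀tilde (τ - 1)) (Icc (0:ℝ) 1) volume := by
    rwa [integrableOn_Icc_iff_integrableOn_Ioo]
  have hgic : IntegrableOn g (Icc (0:ℝ) 1) volume := hXic.sub hXtic
  have hXint : ∀ r ∈ Icc (0:ℝ) 1, IntervalIntegrable (fun τ => x₀ (τ - 1)) volume 0 r := by
    intro r hr
    refine (hXic.mono_set ?_).intervalIntegrable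
    rw [uIcc_of_le hr.1]
    exact Icc_subset_Icc le_rfl hr.2
  have hXtint : ∀ r ∈ Icc (0:ℝ) 1, IntervalIntegrable (fun τ => x₀tilde (τ - 1)) volume 0 r := by
    intro r hr
    refine (hXtic.mono_set ?_).intervalIntegrable
    rw [uIcc_of_le hr.1]
    exact Icc_subset_Icc le_rfl hr.2
  have hgint : ∀ r ∈ Icc (0:ℝ) 1, IntervalIntegrable g volume 0 r := by
    intro r hr
    refine (hgic.mono_set ?_).intervalIntegrable
    rw [uIcc_of_le hr.1]
    exact Icc_subset_Icc le_rfl hr.2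
  have hui : IntegrableOn u (Ioo (0:ℝ) (1+ε)) volume := hu.integrable one_le_two
  have huic : IntegrableOn u (Icc (0:ℝ) 1) volume := by
    rw [integrableOn_Icc_iff_integrableOn_Ioo]
    exact hui.mono_set (Ioo_subset_Ioo le_rfl (by linarith))
  -- the difference function F
  set c := y - ytilde with hcdef
  set F : ℝ → ℝ := fun r => c + a₁ * ∫ τ in (0:ℝ)..r, g τ with hFdef
  have hFeq : ∀ t ∈ Icc (0:ℝ) 1, xtilde a₁ y x₀ t - xtilde a₁ ytilde x₀tilde t = F t := by
    intro t ht
    simp only [xtilde, hFdef, hgdef]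
    rw [intervalIntegral.integral_sub (hXint t ht) (hXtint t ht)]
    ring
  -- Step A : F vanishes on [ε, 1]
  have hA : ∀ t ∈ Icc ε (1:ℝ), F t = 0 := by
    intro t ht
    have hmem : t ∈ Icc ε (1+ε) := ⟨ht.1, le_trans ht.2 (by linarith)⟩
    have h1 := hz t hmem
    have h2 := hz' t hmem
    have hnneg : ¬ t < 0 := not_lt.2 (by linarith [ht.1])
    simp only [traj, if_neg hnneg, if_pos ht.2] at h1 h2
    have h3 : xtilde a₁ y x₀ t - xtilde a₁ ytilde x₀tilde t = 0 := by linarith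
    rw [hFeq t ⟨by linarith [ht.1], ht.2⟩] at h3
    exact h3
  -- continuity of primitives
  have hPX : ContinuousOn (fun w => ∫ τ in (0:ℝ)..w, x₀ (τ - 1)) (Icc (0:ℝ) 1) := by
    have h := intervalIntegral.continuousOn_primitive_interval (a := (0:ℝ)) (b := 1)
      (μ := volume) (f := fun τ => x₀ (τ - 1)) (by rwa [uIcc_of_le zero_le_one])
    rwa [uIcc_of_le zero_le_one] at h
  have hPXt : ContinuousOn (fun w => ∫ τ in (0:ℝ)..w, x₀tilde (τ - 1)) (Icc (0:ℝ) 1) := by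
    have h := intervalIntegral.continuousOn_primitive_interval (a := (0:ℝ)) (b := 1)
      (μ := volume) (f := fun τ => x₀tilde (τ - 1)) (by rwa [uIcc_of_le zero_le_one])
    rwa [uIcc_of_le zero_le_one] at h
  have hPU : ContinuousOn (fun w => ∫ τ in (0:ℝ)..w, u τ) (Icc (0:ℝ) 1) := by
    have h := intervalIntegral.continuousOn_primitive_interval (a := (0:ℝ)) (b := 1)
      (μ := volume) (f := u) (by rwa [uIcc_of_le zero_le_one])
    rwa [uIcc_of_le zero_le_one] at h
  have hFc : ContinuousOn F (Icc (0:ℝ) 1) := by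
    have h := intervalIntegral.continuousOn_primitive_interval (a := (0:ℝ)) (b := 1)
      (μ := volume) (f := g) (by rwa [uIcc_of_le zero_le_one])
    rw [uIcc_of_le zero_le_one] at h
    exact continuousOn_const.add (continuousOn_const.mul h)
  -- maps from [1,2] to [0,1]
  have hmapsTo : MapsTo (fun s : ℝ => s - 1) (Icc (1:ℝ) 2) (Icc (0:ℝ) 1) := by
    intro s hs
    simp only [mem_Icc] at hs ⊢
    constructor <;> linarith [hs.1, hs.2]
  have hsubc : ContinuousOn (fun s : ℝ => s - 1) (Icc (1:ℝ) 2) :=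
    (continuous_sub_right (1:ℝ)).continuousOn
  -- step B : the primitive of F vanishes on (0, ε]
  have hB : ∀ r ∈ Ioc (0:ℝ) ε, (∫ s in (0:ℝ)..r, F s) = 0 := by
    intro r hr
    obtain ⟨t, htdef⟩ : ∃ t : ℝ, t = 1 + r := ⟨1 + r, rfl⟩
    have hmemt : t ∈ Icc ε (1+ε) := ⟨by rw [htdef]; linarith [hr.1], by rw [htdef]; linarith [hr.2]⟩
    have hmem1 : (1:ℝ) ∈ Icc ε (1+ε) := ⟨by linarith, by linarith⟩
    have h1 := hz t hmemt
    have h2 := hz' t hmemt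
    have h3 := hz 1 hmem1
    have h4 := hz' 1 hmem1
    have hnneg : ¬ t < 0 := not_lt.2 (by rw [htdef]; linarith [hr.1])
    have hngt : ¬ t ≤ 1 := not_le.2 (by rw [htdef]; linarith [hr.1])
    simp only [traj, if_neg hnneg, if_neg hngt] at h1 h2
    have hn1 : ¬ (1:ℝ) < 0 := by norm_num
    simp only [traj, if_neg hn1, if_pos le_rfl] at h3 h4
    rw [h3] at h1
    rw [h4] at h2
    -- interval integrability of the integrands on [1, t]
    have hsub : uIcc (1:ℝ) t ⊆ Icc (1:ℝ) 2 := by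
      rw [uIcc_of_le (by rw [htdef]; linarith [hr.1])]
      exact Icc_subset_Icc le_rfl (by rw [htdef]; linarith [hr.2, hε1])
    have hW : IntervalIntegrable
        (fun s => (xtilde a₁ y x₀ (s - 1) + ∫ τ in (0:ℝ)..(s - 1), u τ)
          + ∫ τ in (1:ℝ)..t, u τ) volume 1 t := by
      apply ContinuousOn.intervalIntegrable
      apply ContinuousOn.add _ continuousOn_const
      apply ContinuousOn.add
      · simp only [xtilde]
        exact (continuousOn_const.add (continuousOn_const.mul
          ((hPX.comp hsubc hmapsTo).mono hsub)))
      · exact (hPU.comp hsubc hmapsTo).mono hsub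
    have hWt : IntervalIntegrable
        (fun s => (xtilde a₁ ytilde x₀tilde (s - 1) + ∫ τ in (0:ℝ)..(s - 1), u τ)
          + ∫ τ in (1:ℝ)..t, u τ) volume 1 t := by
      apply ContinuousOn.intervalIntegrable
      apply ContinuousOn.add _ continuousOn_const
      apply ContinuousOn.add
      · simp only [xtilde]
        exact (continuousOn_const.add (continuousOn_const.mul
          ((hPXt.comp hsubc hmapsTo).mono hsub)))
      · exact (hPU.comp hsubc hmapsTo).mono hsub
    have h5 : (∫ s in (1:ℝ)..t, ((xtilde a₁ y x₀ (s - 1) + ∫ τ in (0:ℝ)..(s - 1), u τ)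
        + ∫ τ in (1:ℝ)..t, u τ)) = 0 := by
      apply mul_left_cancel₀ ha₁
      rw [mul_zero]
      linarith [h1]
    have h5' : (∫ s in (1:ℝ)..t, ((xtilde a₁ ytilde x₀tilde (s - 1) + ∫ τ in (0:ℝ)..(s - 1), u τ)
        + ∫ τ in (1:ℝ)..t, u τ)) = 0 := by
      apply mul_left_cancel₀ ha₁
      rw [mul_zero]
      linarith [h2]
    have h6 : (∫ s in (1:ℝ)..t, F (s - 1)) = 0 := by
      have heq : ∀ s ∈ uIcc (1:ℝ) t,
          ((xtilde a₁ y x₀ (s - 1) + ∫ τ in (0:ℝ)..(s - 1), u τ) + ∫ τ in (1:ℝ)..t, u τ)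
          - ((xtilde a₁ ytilde x₀tilde (s - 1) + ∫ τ in (0:ℝ)..(s - 1), u τ)
            + ∫ τ in (1:ℝ)..t, u τ) = F (s - 1) := by
        intro s hs
        have hs2 := hsub hs
        have hmem : s - 1 ∈ Icc (0:ℝ) 1 := hmapsTo hs2
        rw [← hFeq _ hmem]
        ring
      rw [← intervalIntegral.integral_congr heq, intervalIntegral.integral_sub hW hWt, h5, h5']
      ring
    have h7 := intervalIntegral.integral_comp_sub_right (a := (1:ℝ)) (b := t) F 1
    rw [h7, show (1:ℝ) - 1 = 0 by norm_num, show t - 1 = r from by rw [htdef]; ring] at h6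
    exact h6
  -- Step C : F vanishes on (0, ε)
  have hFmid : ∀ r ∈ Ioo (0:ℝ) ε, F r = 0 := by
    intro r hr
    have hr0 := hr.1
    have hrε := hr.2
    have hr1 : r < 1 := lt_trans hrε hε1
    have hFint : IntervalIntegrable F volume 0 r := by
      refine (hFc.mono ?_).intervalIntegrable
      rw [uIcc_of_le (le_of_lt hr0)]
      exact Icc_subset_Icc le_rfl (le_of_lt hr1)
    have hFcIoo : ContinuousOn F (Ioo (0:ℝ) 1) := hFc.mono Ioo_subset_Icc_self
    have hmeasAt : StronglyMeasurableAtFilter F (𝓝 r) volume :=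
      hFcIoo.stronglyMeasurableAtFilter isOpen_Ioo r ⟨hr0, hr1⟩
    have hcontAt : ContinuousAt F r := hFcIoo.continuousAt (Ioo_mem_nhds hr0 hr1)
    have hd1 : HasDerivAt (fun w => ∫ s in (0:ℝ)..w, F s) (F r) r :=
      intervalIntegral.integral_hasDerivAt_right hFint hmeasAt hcontAt
    have hd2 : HasDerivAt (fun w => ∫ s in (0:ℝ)..w, F s) 0 r := by
      have hev : (fun w => ∫ s in (0:ℝ)..w, F s) =ᶠ[𝓝 r] fun _ => (0:ℝ) := by
        filter_upwards [Ioo_mem_nhds hr0 hrε] with w hw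
        exact hB w ⟨hw.1, le_of_lt hw.2⟩
      exact (hasDerivAt_const r (0:ℝ)).congr_of_eventuallyEq hev
    exact hd1.unique hd2
  -- F 0 = 0 by continuity
  have hF0zero : F 0 = 0 := by
    have hIccmem : Icc (0:ℝ) 1 ∈ 𝓝[>] (0:ℝ) :=
      Filter.mem_of_superset (Ioo_mem_nhdsGT_of_mem ⟨le_rfl, zero_lt_one⟩) Ioo_subset_Icc_self
    have h1 : Filter.Tendsto F (𝓝[>] (0:ℝ)) (𝓝 (F 0)) :=
      (hFc 0 ⟨le_rfl, zero_le_one⟩).tendsto.mono_left (nhdsWithin_le_of_mem hIccmem)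
    have h2 : Filter.Tendsto F (𝓝[>] (0:ℝ)) (𝓝 0) := by
      refine Filter.Tendsto.congr' ?_ tendsto_const_nhds
      filter_upwards [Ioo_mem_nhdsGT_of_mem ⟨le_rfl, hε0⟩] with w hw
      exact (hFmid w hw).symm
    exact tendsto_nhds_unique h1 h2
  have hF0 : ∀ r ∈ Icc (0:ℝ) 1, F r = 0 := by
    intro r hrm
    rcases le_or_gt ε r with h | h
    · exact hA r ⟨h, hrm.2⟩
    · rcases eq_or_lt_of_le hrm.1 with h0 | h0
      · rw [← h0]; exact hF0zero
      · exact hFmid r ⟨h0, h⟩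
  have hc0 : c = 0 := by
    have h := hF0zero
    simp only [hFdef, intervalIntegral.integral_same, mul_zero, add_zero] at h
    exact h
  have hyy : y = ytilde := by rw [hcdef] at hc0; linarith
  have hG : ∀ r ∈ Icc (0:ℝ) 1, (∫ τ in (0:ℝ)..r, g τ) = 0 := by
    intro r hrm
    have h := hF0 r hrm
    simp only [hFdef] at h
    rw [hc0, zero_add] at h
    exact (mul_eq_zero.1 h).resolve_left ha₁
  -- Step D : g = 0 a.e. on (0,1)
  haveI hfm3 : IsFiniteMeasure (volume.restrict (Ioo (0:ℝ) 1)) := by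
    constructor
    rw [Measure.restrict_apply_univ, Real.volume_Ioo]
    simp
  have hgiOn : Integrable g (volume.restrict (Ioo (0:ℝ) 1)) :=
    hgic.mono_set Ioo_subset_Icc_self
  have hIoc : ∀ a b : ℝ, a < b → ∫ x in Ioc a b, g x ∂(volume.restrict (Ioo (0:ℝ) 1)) = 0 := by
    intro a b hab
    rw [Measure.restrict_restrict measurableSet_Ioc]
    by_cases hcase : min b 1 ≤ max a 0
    · have hempty : Ioc a b ∩ Ioo (0:ℝ) 1 = ∅ := by
        ext x
        simp only [mem_inter_iff, mem_Ioc, mem_Ioo, mem_empty_iff_false, iff_false, not_and]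
        rintro ⟨h1, h2⟩ h3
        intro h4
        have hm1 : max a 0 < x := max_lt h1 h3
        have hm2 : x ≤ min b 1 := le_min h2 (le_of_lt h4)
        linarith
      rw [hempty]
      simp
    · push_neg at hcase
      have hset : (Ioc a b ∩ Ioo (0:ℝ) 1 : Set ℝ) =ᵐ[volume] Ioc (max a 0) (min b 1) := by
        have h1 : ∀ᵐ x : ℝ ∂volume, x ≠ 1 := by
          have he : {x : ℝ | ¬ x ≠ 1} = {1} := by ext x; simp
          rw [ae_iff, he]
          exact measure_singleton 1
        rw [Filter.eventuallyEq_set]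
        filter_upwards [h1] with x hx
        simp only [mem_inter_iff, mem_Ioc, mem_Ioo]
        constructor
        · rintro ⟨⟨p1, p2⟩, p3, p4⟩
          exact ⟨max_lt p1 p3, le_min p2 (le_of_lt p4)⟩
        · rintro ⟨p1, p2⟩
          have ha1 : a < x := lt_of_le_of_lt (le_max_left a 0) p1
          have h0x : 0 < x := lt_of_le_of_lt (le_max_right a 0) p1
          have hxb : x ≤ b := le_trans p2 (min_le_left b 1)
          have hx1 : x ≤ 1 := le_trans p2 (min_le_right b 1)
          exact ⟨⟨ha1, hxb⟩, h0x, lt_of_le_of_ne hx1 hx⟩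
      rw [setIntegral_congr_set hset]
      have ha'mem : max a 0 ∈ Icc (0:ℝ) 1 :=
        ⟨le_max_right a 0, le_trans (le_of_lt hcase) (min_le_right b 1)⟩
      have hb'mem : min b 1 ∈ Icc (0:ℝ) 1 :=
        ⟨le_trans (le_max_right a 0) (le_of_lt hcase), min_le_right b 1⟩
      rw [← intervalIntegral.integral_of_le (le_of_lt hcase)]
      have hsl := intervalIntegral.integral_interval_sub_left (hgint _ hb'mem) (hgint _ ha'mem)
      rw [← hsl, hG _ hb'mem, hG _ ha'mem]
      ring
  have hUniv : ∫ x, g x ∂(volume.restrict (Ioo (0:ℝ) 1)) = 0 := by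
    calc ∫ x, g x ∂(volume.restrict (Ioo (0:ℝ) 1))
        = ∫ x in Ioc (0:ℝ) 1, g x ∂volume := setIntegral_congr_set Ioo_ae_eq_Ioc
      _ = ∫ τ in (0:ℝ)..1, g τ := (intervalIntegral.integral_of_le zero_le_one).symm
      _ = 0 := hG 1 ⟨zero_le_one, le_rfl⟩
  have hae : g =ᵐ[volume.restrict (Ioo (0:ℝ) 1)] 0 :=
    ae_zero_of_forall_Ioc g _ hgiOn hIoc hUniv
  -- conclude
  rcases hne with h | h
  · exact h hyy
  · apply h
    have h2 : ∀ᵐ τ ∂(volume.restrict (Ioo (0:ℝ) 1)), x₀ (τ - 1) = x₀tilde (τ - 1) := by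
      filter_upwards [hae] with τ hτ
      have hg0 : x₀ (τ - 1) - x₀tilde (τ - 1) = 0 := hτ
      linarith
    have h3 := (hemb.ae_map_iff (p := fun x => x₀ x = x₀tilde x)).2 h2
    rw [shiftMap] at h3
    exact h3
end

section
/- Let N ≥ 1, d₁,…,d_N ∈ ℝ, a₀,a₁,…,a_N ∈ ℝ, ε > 0 and φ₁,…,φ_N ∈ L²(0,ε). Then the functional Φ is Fréchet differentiable at every u₀ ∈ L²(0,ε), with derivative h ↦ 2⟨G[u₀], h⟩_{L²(0,ε)}, where G[u₀](t) = (1 + Σ_{k=1}^N d_k²)·u₀(t) + Σ_{k=1}^N d_k(d_k a₀ − a_k)∫₀ᵗ e^{a₀(t−τ)} u₀(τ)dτ + Σ_{k=1}^N d_k φ_k(t) + Σ_{k=1}^N d_k(d_k a₀ − a_k)∫ₜ^ε e^{−a₀(t−τ)} u₀(τ)dτ + Σ_{k=1}^N (d_k a₀ − a_k)∫ₜ^ε e^{−a₀(t−τ)} φ_k(τ)dτ + Σ_{k=1}^N (d_k a₀ − a_k)² ∫ₜ^ε e^{−a₀(t−τ)} ∫₀^τ e^{a₀(τ−s)} u₀(s)ds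 dτ. -/
open MeasureTheory Set Finset
open scoped ENNReal RealInnerProductSpace

noncomputable section
namespace NeutralAux

/-- The underlying measure: Lebesgue restricted to `(0, ε)`. -/
abbrev em (ε : ℝ) : Measure ℝ := volume.restrict (Set.Ioo 0 ε)

/-- Forward Volterra-type operator. -/
def Vf (a0 : ℝ) (g : ℝ → ℝ) (t : ℝ) : ℝ := ∫ τ in (0:ℝ)..t, Real.exp (a0*(t-τ)) * g τ

/-- Backward (adjoint) Volterra-type operator. -/
def Wf (a0 ε : ℝ) (g : ℝ → ℝ) (t : ℝ) : ℝ := ∫ τ in t..ε, Real.exp (-a0*(t-τ)) * g τ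

variable {a0 ε : ℝ}

instance (ε : ℝ) : IsFiniteMeasure (em ε) :=
  ⟨by simp [Measure.restrict_apply, Real.volume_Ioo]⟩

lemma em_univ (hε : 0 < ε) : (em ε) Set.univ = ENNReal.ofReal ε := by
  simp [Real.volume_Ioo]

lemma integral_interval_eq_em (hε : 0 < ε) (F : ℝ → ℝ) :
    (∫ t in (0:ℝ)..ε, F t) = ∫ t, F t ∂(em ε) := by
  rw [intervalIntegral.integral_of_le hε.le,
    show em ε = volume.restrict (Set.Ioc 0 ε) from Measure.restrict_congr_set Ioo_ae_eq_Ioc]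

lemma ae_sub {g g' : ℝ → ℝ} (hgg' : g =ᵐ[em ε] g') {x y : ℝ} (hx : 0 ≤ x) (hy : y ≤ ε) :
    g =ᵐ[volume.restrict (Set.Ioc x y)] g' := by
  have h1 : volume ({τ | g τ ≠ g' τ} ∩ Set.Ioo 0 ε) = 0 := by
    have := hgg'
    rw [Filter.EventuallyEq, ae_iff, Measure.restrict_apply₀'] at this
    · simpa using this
    · exact measurableSet_Ioo.nullMeasurableSet
  rw [Filter.EventuallyEq, ae_iff, Measure.restrict_apply₀']
  · refine measure_mono_null (fun τ hτ => ?_) (measure_union_null h1 (Real.volume_singleton (a := ε)))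
    rcases hτ with ⟨hne, hτ⟩
    rcases eq_or_ne τ ε with rfl | hτε
    · exact Or.inr rfl
    · exact Or.inl ⟨hne, lt_of_le_of_lt hx hτ.1, lt_of_le_of_ne (hτ.2.trans hy) hτε⟩
  · exact measurableSet_Ioc.nullMeasurableSet

end NeutralAux

namespace NeutralAux

/-- interval integrability of kernel·g on subintervals of [0,ε] -/
lemma kernel_intInt {g : ℝ → ℝ} (hg : IntegrableOn g (Set.Ioo 0 ε) volume)
    {x y : ℝ} (hx : 0 ≤ x) (hxy : x ≤ y) (hy : y ≤ ε) (K : ℝ → ℝ) (hK : Continuous K) :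
    IntervalIntegrable (fun τ => K τ * g τ) volume x y := by
  rw [intervalIntegrable_iff_integrableOn_Ioc_of_le hxy]
  have hsub : Set.Ioc x y ⊆ Set.Ioo 0 ε ∪ {ε} := by
    intro τ hτ
    rcases eq_or_ne τ ε with rfl | hτε
    · exact Or.inr rfl
    · exact Or.inl ⟨lt_of_le_of_lt hx hτ.1, lt_of_le_of_ne (hτ.2.trans hy) hτε⟩
  have hgy : IntegrableOn g (Set.Ioc x y) volume := by
    refine IntegrableOn.mono_set ?_ hsub
    refine IntegrableOn.union hg ?_
    rw [IntegrableOn, Measure.restrict_eq_zero.mpr Real.volume_singleton]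
    exact integrable_zero_measure
  have hKb : ∃ C, ∀ τ ∈ Set.Icc x y, ‖K τ‖ ≤ C := by
    obtain ⟨C, hC⟩ := (isCompact_Icc (a := x) (b := y)).exists_bound_of_continuousOn
      hK.continuousOn
    exact ⟨C, hC⟩
  obtain ⟨C, hC⟩ := hKb
  refine Integrable.bdd_mul (c := C) hgy hK.aestronglyMeasurable ?_
  filter_upwards [ae_restrict_mem measurableSet_Ioc] with τ hτ
  exact hC τ ⟨hτ.1.le, hτ.2⟩

end NeutralAux

namespace NeutralAux

lemma ae_mem_Ioo {ε x y : ℝ} (hx : 0 ≤ x) (hy : y ≤ ε) :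
    ∀ᵐ τ ∂volume, τ ∈ Set.Ioc x y → τ ∈ Set.Ioo 0 ε := by
  rw [ae_iff]
  refine measure_mono_null (fun τ hτ => ?_) (Real.volume_singleton (a := ε))
  simp only [Set.mem_setOf_eq, not_forall] at hτ
  obtain ⟨hτ1, hτ2⟩ := hτ
  by_contra hne
  exact hτ2 ⟨lt_of_le_of_lt hx hτ1.1, lt_of_le_of_ne (hτ1.2.trans hy) hne⟩

variable {a0 ε : ℝ} {g g' : ℝ → ℝ}

lemma Vf_congr (hgg' : g =ᵐ[em ε] g') {t : ℝ} (ht0 : 0 ≤ t) (htε : t ≤ ε) :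
    Vf a0 g t = Vf a0 g' t := by
  refine intervalIntegral.integral_congr_ae ?_
  have h1 : ∀ᵐ τ ∂volume.restrict (Set.Ioc 0 t), g τ = g' τ := ae_sub hgg' le_rfl htε
  have h2 := ae_imp_of_ae_restrict h1
  rw [Set.uIoc_of_le ht0]
  filter_upwards [h2] with τ hτ hmem
  rw [hτ hmem]

lemma Wf_congr (hgg' : g =ᵐ[em ε] g') {t : ℝ} (ht0 : 0 ≤ t) (htε : t ≤ ε) :
    Wf a0 ε g t = Wf a0 ε g' t := by
  refine intervalIntegral.integral_congr_ae ?_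
  have h1 : ∀ᵐ τ ∂volume.restrict (Set.Ioc t ε), g τ = g' τ := ae_sub hgg' ht0 le_rfl
  have h2 := ae_imp_of_ae_restrict h1
  rw [Set.uIoc_of_le htε]
  filter_upwards [h2] with τ hτ hmem
  rw [hτ hmem]

lemma Vf_add (hg : IntegrableOn g (Set.Ioo 0 ε) volume)
    (hg' : IntegrableOn g' (Set.Ioo 0 ε) volume) {t : ℝ} (ht0 : 0 ≤ t) (htε : t ≤ ε) :
    Vf a0 (fun τ => g τ + g' τ) t = Vf a0 g t + Vf a0 g' t := by
  unfold Vf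
  simp only [mul_add]
  exact intervalIntegral.integral_add
    (kernel_intInt hg le_rfl ht0 htε _ (by continuity))
    (kernel_intInt hg' le_rfl ht0 htε _ (by continuity))

lemma Wf_add (hg : IntegrableOn g (Set.Ioo 0 ε) volume)
    (hg' : IntegrableOn g' (Set.Ioo 0 ε) volume) {t : ℝ} (ht0 : 0 ≤ t) (htε : t ≤ ε) :
    Wf a0 ε (fun τ => g τ + g' τ) t = Wf a0 ε g t + Wf a0 ε g' t := by
  unfold Wf
  simp only [mul_add]
  exact intervalIntegral.integral_add
    (kernel_intInt hg ht0 htε le_rfl _ (by continuity))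
    (kernel_intInt hg' ht0 htε le_rfl _ (by continuity))

lemma Vf_smul (c : ℝ) (t : ℝ) : Vf a0 (fun τ => c * g τ) t = c * Vf a0 g t := by
  unfold Vf
  rw [← intervalIntegral.integral_const_mul]
  congr 1 with τ
  ring

lemma Wf_smul (c : ℝ) (t : ℝ) : Wf a0 ε (fun τ => c * g τ) t = c * Wf a0 ε g t := by
  unfold Wf
  rw [← intervalIntegral.integral_const_mul]
  congr 1 with τ
  ring

end NeutralAux

namespace NeutralAux

variable {a0 ε : ℝ} {g g' : ℝ → ℝ}

lemma integrableOn_Ioc_sub (hg : IntegrableOn g (Set.Ioo 0 ε) volume)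
    {x y : ℝ} (hx : 0 ≤ x) (hy : y ≤ ε) : IntegrableOn g (Set.Ioc x y) volume := by
  have hsub : Set.Ioc x y ⊆ Set.Ioo 0 ε ∪ {ε} := by
    intro τ hτ
    rcases eq_or_ne τ ε with rfl | hτε
    · exact Or.inr rfl
    · exact Or.inl ⟨lt_of_le_of_lt hx hτ.1, lt_of_le_of_ne (hτ.2.trans hy) hτε⟩
  refine IntegrableOn.mono_set (IntegrableOn.union hg ?_) hsub
  rw [IntegrableOn, Measure.restrict_eq_zero.mpr Real.volume_singleton]
  exact integrable_zero_measure

lemma Vf_bound (hg : IntegrableOn g (Set.Ioo 0 ε) volume) {t : ℝ}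
    (ht0 : 0 ≤ t) (htε : t ≤ ε) :
    |Vf a0 g t| ≤ Real.exp (|a0| * ε) * ∫ τ, |g τ| ∂(em ε) := by
  have habs : |Vf a0 g t| ≤ ∫ τ in Set.Ioc 0 t, |Real.exp (a0*(t-τ)) * g τ| ∂volume := by
    rw [Vf, intervalIntegral.integral_of_le ht0]
    simpa only [Real.norm_eq_abs] using
      norm_integral_le_integral_norm (μ := volume.restrict (Set.Ioc 0 t))
        (f := fun τ => Real.exp (a0*(t-τ)) * g τ)
  refine habs.trans ?_
  have hmono : ∫ τ in Set.Ioc 0 t, |Real.exp (a0*(t-τ)) * g τ| ∂volume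
      ≤ ∫ τ in Set.Ioc 0 t, Real.exp (|a0| * ε) * |g τ| ∂volume := by
    refine setIntegral_mono_on ?_ ?_ measurableSet_Ioc ?_
    · have := (kernel_intInt hg le_rfl ht0 htε
        (fun τ => Real.exp (a0*(t-τ))) (by continuity))
      rw [intervalIntegrable_iff_integrableOn_Ioc_of_le ht0] at this
      exact this.abs
    · exact ((integrableOn_Ioc_sub hg le_rfl htε).abs.const_mul _)
    · intro τ hτ
      rw [abs_mul]
      refine mul_le_mul ?_ le_rfl (abs_nonneg _) (Real.exp_pos _).le
      rw [abs_of_pos (Real.exp_pos _)]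
      refine Real.exp_le_exp.mpr ?_
      calc a0*(t-τ) ≤ |a0*(t-τ)| := le_abs_self _
        _ = |a0| * |t-τ| := abs_mul _ _
        _ ≤ |a0| * ε := by
            refine mul_le_mul_of_nonneg_left ?_ (abs_nonneg _)
            rw [abs_of_nonneg (by linarith [hτ.2] : (0:ℝ) ≤ t - τ)]
            linarith [hτ.1]
  refine hmono.trans ?_
  rw [integral_const_mul]
  refine mul_le_mul_of_nonneg_left ?_ (Real.exp_pos _).le
  refine setIntegral_mono_set hg.abs ?_ ?_
  · filter_upwards with τ using abs_nonneg _
  · rw [ae_le_set]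
    refine measure_mono_null (fun τ hτ => ?_) (Real.volume_singleton (a := ε))
    obtain ⟨hτ1, hτ2⟩ := hτ
    by_contra hne
    exact hτ2 ⟨lt_of_le_of_lt le_rfl hτ1.1, lt_of_le_of_ne (hτ1.2.trans htε) hne⟩

lemma Wf_bound (hg : IntegrableOn g (Set.Ioo 0 ε) volume) {t : ℝ}
    (ht0 : 0 ≤ t) (htε : t ≤ ε) :
    |Wf a0 ε g t| ≤ Real.exp (|a0| * ε) * ∫ τ, |g τ| ∂(em ε) := by
  have habs : |Wf a0 ε g t| ≤ ∫ τ in Set.Ioc t ε, |Real.exp (-a0*(t-τ)) * g τ| ∂volume := by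
    rw [Wf, intervalIntegral.integral_of_le htε]
    simpa only [Real.norm_eq_abs] using
      norm_integral_le_integral_norm (μ := volume.restrict (Set.Ioc t ε))
        (f := fun τ => Real.exp (-a0*(t-τ)) * g τ)
  refine habs.trans ?_
  have hmono : ∫ τ in Set.Ioc t ε, |Real.exp (-a0*(t-τ)) * g τ| ∂volume
      ≤ ∫ τ in Set.Ioc t ε, Real.exp (|a0| * ε) * |g τ| ∂volume := by
    refine setIntegral_mono_on ?_ ?_ measurableSet_Ioc ?_
    · have := (kernel_intInt hg ht0 htε le_rfl
        (fun τ => Real.exp (-a0*(t-τ))) (by continuity))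
      rw [intervalIntegrable_iff_integrableOn_Ioc_of_le htε] at this
      exact this.abs
    · exact ((integrableOn_Ioc_sub hg ht0 le_rfl).abs.const_mul _)
    · intro τ hτ
      rw [abs_mul]
      refine mul_le_mul ?_ le_rfl (abs_nonneg _) (Real.exp_pos _).le
      rw [abs_of_pos (Real.exp_pos _)]
      refine Real.exp_le_exp.mpr ?_
      calc -a0*(t-τ) ≤ |(-a0)*(t-τ)| := le_abs_self _
        _ = |a0| * |t-τ| := by rw [abs_mul, abs_neg]
        _ ≤ |a0| * ε := by
            refine mul_le_mul_of_nonneg_left ?_ (abs_nonneg _)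
            rw [abs_of_nonpos (by linarith [hτ.1] : t - τ ≤ 0)]
            linarith [hτ.2]
  refine hmono.trans ?_
  rw [integral_const_mul]
  refine mul_le_mul_of_nonneg_left ?_ (Real.exp_pos _).le
  refine setIntegral_mono_set hg.abs ?_ ?_
  · filter_upwards with τ using abs_nonneg _
  · rw [ae_le_set]
    refine measure_mono_null (fun τ hτ => ?_) (Real.volume_singleton (a := ε))
    obtain ⟨hτ1, hτ2⟩ := hτ
    by_contra hne
    exact hτ2 ⟨lt_of_le_of_lt ht0 hτ1.1, lt_of_le_of_ne (hτ1.2) hne⟩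

end NeutralAux

namespace NeutralAux

variable {a0 ε : ℝ} {g g' : ℝ → ℝ}

lemma indicator_kernel_integrable (hε : 0 < ε) (hg : IntegrableOn g (Set.Ioo 0 ε) volume)
    (b : ℝ) :
    Integrable (fun τ => Real.exp (b*τ) * (Set.Ioo 0 ε).indicator g τ) volume := by
  have heq : (fun τ => Real.exp (b*τ) * (Set.Ioo 0 ε).indicator g τ)
      = (Set.Ioo 0 ε).indicator (fun τ => Real.exp (b*τ) * g τ) := by
    ext τ
    by_cases hτ : τ ∈ Set.Ioo 0 ε <;>
      simp [Set.indicator_of_mem, Set.indicator_of_notMem, hτ]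
  rw [heq, integrable_indicator_iff measurableSet_Ioo]
  have h2 := kernel_intInt hg le_rfl hε.le le_rfl (fun τ => Real.exp (b*τ)) (by continuity)
  rw [intervalIntegrable_iff_integrableOn_Ioc_of_le hε.le] at h2
  exact h2.mono_set Set.Ioo_subset_Ioc_self

/-- `Vf` agrees on `[0,ε]` with a continuous function. -/
lemma Vf_eq_cont (hε : 0 < ε) (hg : IntegrableOn g (Set.Ioo 0 ε) volume) :
    ∃ F : ℝ → ℝ, Continuous F ∧ ∀ t, 0 ≤ t → t ≤ ε → Vf a0 g t = F t := by
  set gi := (Set.Ioo 0 ε).indicator g with hgi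
  have hint : Integrable (fun τ => Real.exp (-a0*τ) * gi τ) volume :=
    indicator_kernel_integrable hε hg (-a0)
  refine ⟨fun t => Real.exp (a0*t) * ∫ τ in (0:ℝ)..t, Real.exp (-a0*τ) * gi τ, ?_, ?_⟩
  · exact (Real.continuous_exp.comp (continuous_const.mul continuous_id)).mul
      (hint.continuous_primitive 0)
  · intro t ht0 htε
    have step1 : Vf a0 g t = ∫ τ in (0:ℝ)..t, Real.exp (a0*t) * (Real.exp (-a0*τ) * g τ) := by
      refine intervalIntegral.integral_congr (fun τ _ => ?_)
      have h3 : Real.exp (a0*(t-τ)) = Real.exp (a0*t) * Real.exp (-a0*τ) := by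
        rw [← Real.exp_add]; ring_nf
      rw [h3]; ring
    rw [step1, intervalIntegral.integral_const_mul]
    congr 1
    refine intervalIntegral.integral_congr_ae ?_
    rw [Set.uIoc_of_le ht0]
    filter_upwards [ae_mem_Ioo (ε := ε) le_rfl htε] with τ hτ hmem
    rw [hgi, Set.indicator_of_mem (hτ hmem)]

/-- `Wf` agrees on `[0,ε]` with a continuous function. -/
lemma Wf_eq_cont (hε : 0 < ε) (hg : IntegrableOn g (Set.Ioo 0 ε) volume) :
    ∃ F : ℝ → ℝ, Continuous F ∧ ∀ t, 0 ≤ t → t ≤ ε → Wf a0 ε g t = F t := by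
  set gi := (Set.Ioo 0 ε).indicator g with hgi
  have hint : Integrable (fun τ => Real.exp (a0*τ) * gi τ) volume :=
    indicator_kernel_integrable hε hg a0
  refine ⟨fun t => Real.exp (-a0*t) *
      ((∫ τ in (0:ℝ)..ε, Real.exp (a0*τ) * gi τ) - ∫ τ in (0:ℝ)..t, Real.exp (a0*τ) * gi τ),
      ?_, ?_⟩
  · exact (Real.continuous_exp.comp (continuous_const.mul continuous_id)).mul
      (continuous_const.sub (hint.continuous_primitive 0))
  · intro t ht0 htε
    have step1 : Wf a0 ε g t = ∫ τ in t..ε, Real.exp (-a0*t) * (Real.exp (a0*τ) * g τ) := by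
      refine intervalIntegral.integral_congr (fun τ _ => ?_)
      have h3 : Real.exp (-a0*(t-τ)) = Real.exp (-a0*t) * Real.exp (a0*τ) := by
        rw [← Real.exp_add]; ring_nf
      rw [h3]; ring
    rw [step1, intervalIntegral.integral_const_mul]
    congr 1
    have step2 : ∫ τ in t..ε, Real.exp (a0*τ) * g τ = ∫ τ in t..ε, Real.exp (a0*τ) * gi τ := by
      refine intervalIntegral.integral_congr_ae ?_
      rw [Set.uIoc_of_le htε]
      filter_upwards [ae_mem_Ioo (ε := ε) ht0 le_rfl] with τ hτ hmem
      rw [hgi, Set.indicator_of_mem (hτ hmem)]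
    rw [step2, eq_sub_iff_add_eq, add_comm,
      intervalIntegral.integral_add_adjacent_intervals
        hint.intervalIntegrable hint.intervalIntegrable]

end NeutralAux

namespace NeutralAux

variable {a0 ε : ℝ} {g g' : ℝ → ℝ}

lemma Vf_aesm (hε : 0 < ε) (hg : IntegrableOn g (Set.Ioo 0 ε) volume) :
    AEStronglyMeasurable (Vf a0 g) (em ε) := by
  obtain ⟨F, hF, heq⟩ := Vf_eq_cont (a0 := a0) hε hg
  refine hF.aestronglyMeasurable.congr ?_
  filter_upwards [ae_restrict_mem measurableSet_Ioo] with t ht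
  exact (heq t ht.1.le ht.2.le).symm

lemma Wf_aesm (hε : 0 < ε) (hg : IntegrableOn g (Set.Ioo 0 ε) volume) :
    AEStronglyMeasurable (Wf a0 ε g) (em ε) := by
  obtain ⟨F, hF, heq⟩ := Wf_eq_cont (a0 := a0) hε hg
  refine hF.aestronglyMeasurable.congr ?_
  filter_upwards [ae_restrict_mem measurableSet_Ioo] with t ht
  exact (heq t ht.1.le ht.2.le).symm

lemma Vf_mem (hε : 0 < ε) (hg : IntegrableOn g (Set.Ioo 0 ε) volume) :
    MemLp (Vf a0 g) 2 (em ε) := by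
  refine MemLp.of_bound (Vf_aesm hε hg) (Real.exp (|a0| * ε) * ∫ τ, |g τ| ∂(em ε)) ?_
  filter_upwards [ae_restrict_mem measurableSet_Ioo] with t ht
  rw [Real.norm_eq_abs]
  exact Vf_bound hg ht.1.le ht.2.le

lemma Wf_mem (hε : 0 < ε) (hg : IntegrableOn g (Set.Ioo 0 ε) volume) :
    MemLp (Wf a0 ε g) 2 (em ε) := by
  refine MemLp.of_bound (Wf_aesm hε hg) (Real.exp (|a0| * ε) * ∫ τ, |g τ| ∂(em ε)) ?_
  filter_upwards [ae_restrict_mem measurableSet_Ioo] with t ht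
  rw [Real.norm_eq_abs]
  exact Wf_bound hg ht.1.le ht.2.le

lemma Vf_integrableOn (hε : 0 < ε) (hg : IntegrableOn g (Set.Ioo 0 ε) volume) :
    IntegrableOn (Vf a0 g) (Set.Ioo 0 ε) volume :=
  (Vf_mem hε hg).integrable (by norm_num)

/-! ### L² facts -/

lemma inner_eq (x y : Lp ℝ 2 (em ε)) : ⟪x, y⟫ = ∫ t, x t * y t ∂(em ε) := by
  rw [L2.inner_def]
  simp [RCLike.inner_apply, conj_trivial]
  congr 1 with t
  ring

lemma nsq (x : Lp ℝ 2 (em ε)) : ∫ t, (x t)^2 ∂(em ε) = ‖x‖^2 := by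
  rw [← real_inner_self_eq_norm_sq, inner_eq]
  congr 1 with t
  ring

lemma isq {F : ℝ → ℝ} {x : Lp ℝ 2 (em ε)} (hF : F =ᵐ[em ε] ⇑x) :
    ∫ t, (F t)^2 ∂(em ε) = ‖x‖^2 := by
  rw [← nsq x]
  refine integral_congr_ae ?_
  filter_upwards [hF] with t ht
  rw [ht]

lemma integral_one_em (hε : 0 < ε) : ∫ _ : ℝ, (1:ℝ) ∂(em ε) = ε := by
  simp [Real.volume_Ioo, ENNReal.toReal_ofReal hε.le, hε.le]

lemma abs_integral_le (hε : 0 < ε) (x : Lp ℝ 2 (em ε)) :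
    ∫ t, |x t| ∂(em ε) ≤ Real.sqrt ε * ‖x‖ := by
  have hmem : MemLp (fun t => |x t|) 2 (em ε) := (Lp.memLp x).abs
  set y := hmem.toLp _ with hy
  set one := (memLp_const (μ := em ε) (1:ℝ)).toLp _ with hone
  have h1 : ∫ t, |x t| ∂(em ε) = ⟪y, one⟫ := by
    rw [inner_eq]
    refine integral_congr_ae ?_
    filter_upwards [hmem.coeFn_toLp, (memLp_const (μ := em ε) (1:ℝ)).coeFn_toLp]
      with t h1 h2
    rw [hy, h1, h2, mul_one]
  have hyn : ‖y‖ = ‖x‖ := by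
    have : ‖y‖^2 = ‖x‖^2 := by
      rw [← isq (x := y) hmem.coeFn_toLp.symm, ← nsq x]
      exact integral_congr_ae (Filter.Eventually.of_forall (fun t => (sq_abs _)))
    nlinarith [norm_nonneg y, norm_nonneg x]
  have honen : ‖one‖ = Real.sqrt ε := by
    have h2 : ‖one‖^2 = ε := by
      rw [← isq (x := one) (memLp_const (μ := em ε) (1:ℝ)).coeFn_toLp.symm]
      simpa using integral_one_em hε
    rw [← Real.sqrt_sq (norm_nonneg one), h2]
  calc ∫ t, |x t| ∂(em ε) = ⟪y, one⟫ := h1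
    _ ≤ ‖y‖ * ‖one‖ := real_inner_le_norm y one
    _ = Real.sqrt ε * ‖x‖ := by rw [hyn, honen]; ring

end NeutralAux

namespace NeutralAux

variable {a0 ε : ℝ} {g g' : ℝ → ℝ}

lemma Lp_integrableOn (x : Lp ℝ 2 (em ε)) : IntegrableOn (⇑x) (Set.Ioo 0 ε) volume :=
  (Lp.memLp x).integrable one_le_two

lemma norm_toLp_sq {F : ℝ → ℝ} (mem : MemLp F 2 (em ε)) :
    ‖mem.toLp F‖^2 = ∫ t, (F t)^2 ∂(em ε) :=
  (isq mem.coeFn_toLp.symm).symm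

lemma norm_toLp_le_of_bound (hε : 0 < ε) {F : ℝ → ℝ} {B : ℝ} (mem : MemLp F 2 (em ε))
    (hB : 0 ≤ B) (hae : ∀ᵐ t ∂(em ε), |F t| ≤ B) :
    ‖mem.toLp F‖ ≤ Real.sqrt ε * B := by
  have hsq : ‖mem.toLp F‖^2 ≤ ε * B^2 := by
    rw [norm_toLp_sq]
    calc ∫ t, (F t)^2 ∂(em ε) ≤ ∫ _t, B^2 ∂(em ε) := by
          refine integral_mono_ae mem.integrable_sq (integrable_const _) ?_
          filter_upwards [hae] with t ht
          calc (F t)^2 = |F t|^2 := (sq_abs _).symm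
            _ ≤ B^2 := pow_le_pow_left₀ (abs_nonneg _) ht 2
      _ = ε * B^2 := by
          rw [integral_const, smul_eq_mul]
          congr 1
          simp [Real.volume_Ioo, ENNReal.toReal_ofReal hε.le, hε.le]
  calc ‖mem.toLp F‖ = Real.sqrt (‖mem.toLp F‖^2) := (Real.sqrt_sq (norm_nonneg _)).symm
    _ ≤ Real.sqrt (ε * B^2) := Real.sqrt_le_sqrt hsq
    _ = Real.sqrt ε * B := by
        rw [Real.sqrt_mul hε.le, Real.sqrt_sq hB]

lemma norm_VfLp_le (hε : 0 < ε) (x : Lp ℝ 2 (em ε)) :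
    ‖(Vf_mem (a0 := a0) hε (Lp_integrableOn x)).toLp (Vf a0 ⇑x)‖
      ≤ (ε * Real.exp (|a0| * ε)) * ‖x‖ := by
  have hb : ∀ᵐ t ∂(em ε), |Vf a0 (⇑x) t| ≤ Real.exp (|a0| * ε) * ∫ τ, |x τ| ∂(em ε) := by
    filter_upwards [ae_restrict_mem measurableSet_Ioo] with t ht
    exact Vf_bound (Lp_integrableOn x) ht.1.le ht.2.le
  have h1 := norm_toLp_le_of_bound hε (Vf_mem (a0 := a0) hε (Lp_integrableOn x))
    (mul_nonneg (Real.exp_pos _).le (integral_nonneg (fun τ => abs_nonneg _))) hb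
  refine h1.trans ?_
  have h2 := abs_integral_le hε x
  calc Real.sqrt ε * (Real.exp (|a0| * ε) * ∫ τ, |x τ| ∂(em ε))
      ≤ Real.sqrt ε * (Real.exp (|a0| * ε) * (Real.sqrt ε * ‖x‖)) := by
        refine mul_le_mul_of_nonneg_left (mul_le_mul_of_nonneg_left h2 (Real.exp_pos _).le)
          (Real.sqrt_nonneg _)
    _ = (Real.sqrt ε * Real.sqrt ε) * Real.exp (|a0| * ε) * ‖x‖ := by ring
    _ = (ε * Real.exp (|a0| * ε)) * ‖x‖ := by rw [Real.mul_self_sqrt hε.le]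

end NeutralAux

namespace NeutralAux

variable {a0 ε : ℝ}

lemma fubini_adjoint (hε : 0 < ε) {g h : ℝ → ℝ}
    (hg : MemLp g 2 (em ε)) (hh : MemLp h 2 (em ε)) :
    ∫ t, Vf a0 g t * h t ∂(em ε) = ∫ τ, g τ * Wf a0 ε h τ ∂(em ε) := by
  set μ := em ε with hμ
  set S : Set (ℝ × ℝ) := {q : ℝ × ℝ | q.2 ≤ q.1} with hS
  have hSm : MeasurableSet S := measurableSet_le measurable_snd measurable_fst
  set F : ℝ × ℝ → ℝ :=
    S.indicator (fun q => Real.exp (a0*(q.1-q.2)) * g q.2 * h q.1) with hF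
  have hgi : Integrable g μ := hg.integrable one_le_two
  have hhi : Integrable h μ := hh.integrable one_le_two
  -- measurability
  have hFaesm : AEStronglyMeasurable F (μ.prod μ) := by
    refine AEStronglyMeasurable.indicator ?_ hSm
    refine AEStronglyMeasurable.mul (AEStronglyMeasurable.mul ?_ ?_) ?_
    · exact (Real.continuous_exp.comp
        (continuous_const.mul (continuous_fst.sub continuous_snd))).aestronglyMeasurable
    · exact hg.aestronglyMeasurable.comp_snd
    · exact hh.aestronglyMeasurable.comp_fst
  -- integrability on the product
  have hprod_ae : ∀ᵐ p ∂(μ.prod μ), p ∈ Set.Ioo (0:ℝ) ε ×ˢ Set.Ioo (0:ℝ) ε := by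
    rw [hμ]
    show ∀ᵐ p ∂((volume.restrict _).prod (volume.restrict _)), _
    rw [Measure.prod_restrict]
    exact ae_restrict_mem (measurableSet_Ioo.prod measurableSet_Ioo)
  have hFint : Integrable F (μ.prod μ) := by
    refine Integrable.mono'
      (((hhi.abs.mul_prod hgi.abs).const_mul (Real.exp (|a0| * ε)))) hFaesm ?_
    filter_upwards [hprod_ae] with p hp
    rcases hp with ⟨hp1, hp2⟩
    by_cases hpS : p ∈ S
    · rw [hF, Set.indicator_of_mem hpS, Real.norm_eq_abs, abs_mul, abs_mul,
        abs_of_pos (Real.exp_pos _)]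
      have hexp : Real.exp (a0*(p.1-p.2)) ≤ Real.exp (|a0| * ε) := by
        refine Real.exp_le_exp.mpr ?_
        calc a0*(p.1-p.2) ≤ |a0*(p.1-p.2)| := le_abs_self _
          _ = |a0| * |p.1-p.2| := abs_mul _ _
          _ ≤ |a0| * ε := by
              refine mul_le_mul_of_nonneg_left ?_ (abs_nonneg _)
              rw [abs_of_nonneg (by exact sub_nonneg.mpr hpS)]
              have := hp1.2; have := hp2.1; linarith
      calc Real.exp (a0*(p.1-p.2)) * |g p.2| * |h p.1|
          ≤ Real.exp (|a0| * ε) * |g p.2| * |h p.1| := by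
            refine mul_le_mul_of_nonneg_right
              (mul_le_mul_of_nonneg_right hexp (abs_nonneg _)) (abs_nonneg _)
        _ = Real.exp (|a0| * ε) * (|h p.1| * |g p.2|) := by ring
    · rw [hF, Set.indicator_of_notMem hpS]
      simp only [norm_zero]
      positivity
  -- inner integral computations
  have stepA : ∀ t ∈ Set.Ioo (0:ℝ) ε, (∫ τ, F (t, τ) ∂μ) = Vf a0 g t * h t := by
    intro t ht
    have hfun : (fun τ => F (t, τ))
        = fun τ => (Set.Iic t).indicator (fun τ => Real.exp (a0*(t-τ)) * g τ) τ * h t := by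
      ext τ
      by_cases hτ : τ ≤ t
      · rw [hF, Set.indicator_of_mem (by exact hτ : (t,τ) ∈ S),
          Set.indicator_of_mem (by exact hτ)]
      · rw [hF, Set.indicator_of_notMem (by exact hτ : ¬ (t,τ) ∈ S),
          Set.indicator_of_notMem (by exact hτ), zero_mul]
    rw [hfun, integral_mul_const]
    congr 1
    rw [integral_indicator measurableSet_Iic, hμ]
    show ∫ τ in Set.Iic t, _ ∂(volume.restrict _) = _
    rw [Measure.restrict_restrict measurableSet_Iic]
    have hset : Set.Iic t ∩ Set.Ioo 0 ε = Set.Ioc 0 t := by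
      ext τ
      constructor
      · rintro ⟨h1, h2, _⟩; exact ⟨h2, h1⟩
      · rintro ⟨h1, h2⟩; exact ⟨h2, h1, lt_of_le_of_lt h2 ht.2⟩
    rw [hset, Vf, intervalIntegral.integral_of_le ht.1.le]
  have stepB : ∀ τ ∈ Set.Ioo (0:ℝ) ε, (∫ t, F (t, τ) ∂μ) = g τ * Wf a0 ε h τ := by
    intro τ hτ
    have hfun : (fun t => F (t, τ))
        = fun t => (Set.Ici τ).indicator (fun t => Real.exp (a0*(t-τ)) * h t) t * g τ := by
      ext t
      by_cases htm : τ ≤ t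
      · rw [hF, Set.indicator_of_mem (by exact htm : (t,τ) ∈ S),
          Set.indicator_of_mem (by exact htm)]
        ring
      · rw [hF, Set.indicator_of_notMem (by exact htm : ¬ (t,τ) ∈ S),
          Set.indicator_of_notMem (by exact htm), zero_mul]
    rw [hfun, integral_mul_const]
    rw [integral_indicator measurableSet_Ici, hμ]
    show (∫ t in Set.Ici τ, _ ∂(volume.restrict _)) * _ = _
    rw [Measure.restrict_restrict measurableSet_Ici]
    have hset : Set.Ici τ ∩ Set.Ioo 0 ε = Set.Ico τ ε := by
      ext t
      constructor
      · rintro ⟨h1, _, h3⟩; exact ⟨h1, h3⟩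
      · rintro ⟨h1, h2⟩; exact ⟨h1, lt_of_lt_of_le hτ.1 h1, h2⟩
    rw [hset, Measure.restrict_congr_set Ico_ae_eq_Ioc]
    have : Wf a0 ε h τ = ∫ t in Set.Ioc τ ε, Real.exp (a0*(t-τ)) * h t ∂volume := by
      rw [Wf, intervalIntegral.integral_of_le hτ.2.le]
      refine setIntegral_congr_fun measurableSet_Ioc (fun t _ => ?_)
      congr 1
      ring_nf
    rw [this, mul_comm]
  -- put it together
  calc ∫ t, Vf a0 g t * h t ∂μ = ∫ t, ∫ τ, F (t, τ) ∂μ ∂μ := by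
        refine integral_congr_ae ?_
        filter_upwards [ae_restrict_mem measurableSet_Ioo] with t ht
        exact (stepA t ht).symm
    _ = ∫ τ, ∫ t, F (t, τ) ∂μ ∂μ := by
        exact integral_integral_swap (f := fun t τ => F (t, τ)) (by exact hFint)
    _ = ∫ τ, g τ * Wf a0 ε h τ ∂μ := by
        refine integral_congr_ae ?_
        filter_upwards [ae_restrict_mem measurableSet_Ioo] with τ hτ
        exact stepB τ hτ

end NeutralAux

namespace NeutralAux

variable {ε : ℝ}

lemma coeFn_sum {ι : Type*} (s : Finset ι) (f : ι → Lp ℝ 2 (em ε)) :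
    ⇑(∑ i ∈ s, f i) =ᵐ[em ε] fun t => ∑ i ∈ s, f i t := by
  classical
  induction s using Finset.induction_on with
  | empty => simpa [Pi.zero_def] using Lp.coeFn_zero ℝ 2 (em ε)
  | insert i s hnotmem ih =>
      rw [Finset.sum_insert hnotmem]
      filter_upwards [Lp.coeFn_add (f i) (∑ j ∈ s, f j), ih] with t h1 h2
      rw [h1]
      simp only [Pi.add_apply, h2]
      rw [Finset.sum_insert hnotmem]

end NeutralAux

namespace NeutralAux

lemma alg_helper (N : ℕ) (d c : ℕ → ℝ) (U Vt Wu WVu : ℝ) (Φt Wφ : ℕ → ℝ) :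
    (1 + ∑ k ∈ Finset.Icc 1 N, (d k)^2) * U
      + (∑ k ∈ Finset.Icc 1 N, d k * c k * Vt)
      + (∑ k ∈ Finset.Icc 1 N, d k * Φt k)
      + (∑ k ∈ Finset.Icc 1 N, d k * c k * Wu)
      + (∑ k ∈ Finset.Icc 1 N, c k * Wφ k)
      + (∑ k ∈ Finset.Icc 1 N, (c k)^2 * WVu)
    = U + ∑ s ∈ Finset.Icc 1 N,
        (d s * (Φt s + d s * U + c s * Vt) + c s * (Wφ s + d s * Wu + c s * WVu)) := by
  have h1 : ∑ s ∈ Finset.Icc 1 N,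
      (d s * (Φt s + d s * U + c s * Vt) + c s * (Wφ s + d s * Wu + c s * WVu))
      = ∑ s ∈ Finset.Icc 1 N,
      ((d s * Φt s + (d s)^2 * U + d s * c s * Vt)
        + (c s * Wφ s + d s * c s * Wu + (c s)^2 * WVu)) :=
    Finset.sum_congr rfl (fun s _ => by ring)
  rw [h1]
  simp only [Finset.sum_add_distrib]
  rw [add_mul, one_mul, Finset.sum_mul]
  ring

end NeutralAux

section MAINTHM
open NeutralAux

set_option maxHeartbeats 1000000 in
/-- the neutral energy functional `Φ` on `L²(0,ε)` is Fréchet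
differentiable at every `u₀`, with derivative `h ↦ 2⟨G[u₀], h⟩`. -/
theorem neutral_energy_hasFDerivAt
    (N : ℕ) (hN : 1 ≤ N) (d a : ℕ → ℝ) (ε : ℝ) (hε : 0 < ε)
    (φ : ℕ → ℝ → ℝ)
    (hφ : ∀ s ∈ Finset.Icc 1 N, MemLp (φ s) 2 (volume.restrict (Set.Ioo (0:ℝ) ε)))
    (u₀ : Lp ℝ 2 (volume.restrict (Set.Ioo (0:ℝ) ε))) :
    let G : ℝ → ℝ := fun t =>
      (1 + ∑ k ∈ Finset.Icc 1 N, (d k) ^ 2) * u₀ t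
      + (∑ k ∈ Finset.Icc 1 N, d k * (d k * a 0 - a k) *
          ∫ τ in (0:ℝ)..t, Real.exp (a 0 * (t - τ)) * u₀ τ)
      + (∑ k ∈ Finset.Icc 1 N, d k * φ k t)
      + (∑ k ∈ Finset.Icc 1 N, d k * (d k * a 0 - a k) *
          ∫ τ in t..ε, Real.exp (- a 0 * (t - τ)) * u₀ τ)
      + (∑ k ∈ Finset.Icc 1 N, (d k * a 0 - a k) *
          ∫ τ in t..ε, Real.exp (- a 0 * (t - τ)) * φ k τ)
      + (∑ k ∈ Finset.Icc 1 N, (d k * a 0 - a k) ^ 2 *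
          ∫ τ in t..ε, Real.exp (- a 0 * (t - τ)) *
            ∫ s in (0:ℝ)..τ, Real.exp (a 0 * (τ - s)) * u₀ s)
    ∃ L : Lp ℝ 2 (volume.restrict (Set.Ioo (0:ℝ) ε)) →L[ℝ] ℝ,
      HasFDerivAt
        (fun f : Lp ℝ 2 (volume.restrict (Set.Ioo (0:ℝ) ε)) =>
          (∫ t in (0:ℝ)..ε, (f t) ^ 2) +
            ∑ s ∈ Finset.Icc 1 N, ∫ t in (0:ℝ)..ε,
              (φ s t + d s * f t +
                (d s * a 0 - a s) * ∫ τ in (0:ℝ)..t, Real.exp (a 0 * (t - τ)) * f τ) ^ 2)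
        L u₀ ∧
      ∀ h : Lp ℝ 2 (volume.restrict (Set.Ioo (0:ℝ) ε)),
        L h = 2 * ∫ t in (0:ℝ)..ε, G t * h t := by

  classical
  intro G
  have hG : ∀ t, G t =
      (1 + ∑ k ∈ Finset.Icc 1 N, (d k) ^ 2) * u₀ t
      + (∑ k ∈ Finset.Icc 1 N, d k * (d k * a 0 - a k) * Vf (a 0) (⇑u₀) t)
      + (∑ k ∈ Finset.Icc 1 N, d k * φ k t)
      + (∑ k ∈ Finset.Icc 1 N, d k * (d k * a 0 - a k) * Wf (a 0) ε (⇑u₀) t)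
      + (∑ k ∈ Finset.Icc 1 N, (d k * a 0 - a k) * Wf (a 0) ε (φ k) t)
      + (∑ k ∈ Finset.Icc 1 N, (d k * a 0 - a k) ^ 2 * Wf (a 0) ε (Vf (a 0) (⇑u₀)) t) :=
    fun _ => rfl
  have hui : IntegrableOn (⇑u₀) (Set.Ioo 0 ε) volume := Lp_integrableOn u₀
  -- Lp-valued objects
  set φL : ℕ → Lp ℝ 2 (em ε) := fun s =>
    if hs : s ∈ Finset.Icc 1 N then (hφ s hs).toLp (φ s) else 0 with hφLdef
  set VL : Lp ℝ 2 (em ε) → Lp ℝ 2 (em ε) := fun x =>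
    (Vf_mem hε (Lp_integrableOn x)).toLp (Vf (a 0) ⇑x) with hVLdef
  set WL : Lp ℝ 2 (em ε) → Lp ℝ 2 (em ε) := fun x =>
    (Wf_mem hε (Lp_integrableOn x)).toLp (Wf (a 0) ε ⇑x) with hWLdef
  set ψ : ℕ → Lp ℝ 2 (em ε) := fun s =>
    φL s + d s • u₀ + (d s * a 0 - a s) • VL u₀ with hψdef
  set B : Lp ℝ 2 (em ε) → ℕ → Lp ℝ 2 (em ε) := fun h s =>
    d s • h + (d s * a 0 - a s) • VL h with hBdef
  set Glp : Lp ℝ 2 (em ε) :=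
    u₀ + ∑ s ∈ Finset.Icc 1 N, (d s • ψ s + (d s * a 0 - a s) • WL (ψ s)) with hGlpdef
  -- coeFn facts
  have hVLcoe : ∀ x : Lp ℝ 2 (em ε), ⇑(VL x) =ᵐ[em ε] Vf (a 0) ⇑x :=
    fun x => MemLp.coeFn_toLp _
  have hWLcoe : ∀ x : Lp ℝ 2 (em ε), ⇑(WL x) =ᵐ[em ε] Wf (a 0) ε ⇑x :=
    fun x => MemLp.coeFn_toLp _
  have hφLcoe : ∀ s (hs : s ∈ Finset.Icc 1 N), ⇑(φL s) =ᵐ[em ε] φ s := by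
    intro s hs
    have h1 : φL s = (hφ s hs).toLp (φ s) := by rw [hφLdef]; exact dif_pos hs
    rw [h1]
    exact MemLp.coeFn_toLp _
  have hψfcoe : ∀ (f : Lp ℝ 2 (em ε)), ∀ s ∈ Finset.Icc 1 N,
      ⇑(φL s + d s • f + (d s * a 0 - a s) • VL f) =ᵐ[em ε]
        fun t => φ s t + d s * f t + (d s * a 0 - a s) * Vf (a 0) (⇑f) t := by
    intro f s hs
    filter_upwards [Lp.coeFn_add (φL s + d s • f) ((d s * a 0 - a s) • VL f),
      Lp.coeFn_add (φL s) (d s • f), Lp.coeFn_smul (d s) f,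
      Lp.coeFn_smul (d s * a 0 - a s) (VL f), hVLcoe f, hφLcoe s hs]
      with t e1 e2 e3 e4 e5 e6
    rw [e1, Pi.add_apply, e2, Pi.add_apply, e3, e4, Pi.smul_apply, Pi.smul_apply,
      smul_eq_mul, smul_eq_mul, e5, e6]
  have hψcoe : ∀ s ∈ Finset.Icc 1 N, ⇑(ψ s) =ᵐ[em ε]
      fun t => φ s t + d s * u₀ t + (d s * a 0 - a s) * Vf (a 0) (⇑u₀) t :=
    fun s hs => hψfcoe u₀ s hs
  -- the functional, rewritten through the Hilbert space structure
  have hΦeq : ∀ f : Lp ℝ 2 (em ε),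
      ((∫ t in (0:ℝ)..ε, (f t) ^ 2) +
        ∑ s ∈ Finset.Icc 1 N, ∫ t in (0:ℝ)..ε,
          (φ s t + d s * f t +
            (d s * a 0 - a s) * ∫ τ in (0:ℝ)..t, Real.exp (a 0 * (t - τ)) * f τ) ^ 2)
      = ‖f‖^2 + ∑ s ∈ Finset.Icc 1 N,
          ‖φL s + d s • f + (d s * a 0 - a s) • VL f‖^2 := by
    intro f
    congr 1
    · rw [integral_interval_eq_em hε]
      exact nsq f
    · refine Finset.sum_congr rfl fun s hs => ?_
      rw [integral_interval_eq_em hε]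
      exact isq (hψfcoe f s hs).symm
  -- additivity of VL
  have hVadd : ∀ x y : Lp ℝ 2 (em ε), VL (x + y) = VL x + VL y := by
    intro x y
    refine Lp.ext ?_
    have h3 : Vf (a 0) ⇑(x+y) =ᵐ[em ε] fun t => Vf (a 0) (⇑x) t + Vf (a 0) (⇑y) t := by
      filter_upwards [ae_restrict_mem measurableSet_Ioo] with t ht
      have e1 : Vf (a 0) ⇑(x+y) t = Vf (a 0) (fun τ => x τ + y τ) t :=
        Vf_congr (Lp.coeFn_add x y) ht.1.le ht.2.le
      rw [e1, Vf_add (Lp_integrableOn x) (Lp_integrableOn y) ht.1.le ht.2.le]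
    have h2 : ⇑(VL x + VL y) =ᵐ[em ε] fun t => Vf (a 0) (⇑x) t + Vf (a 0) (⇑y) t := by
      filter_upwards [Lp.coeFn_add (VL x) (VL y), hVLcoe x, hVLcoe y] with t e1 e2 e3
      rw [e1, Pi.add_apply, e2, e3]
    exact (hVLcoe (x+y)).trans (h3.trans h2.symm)
  -- the adjoint identity
  have hFub : ∀ x y : Lp ℝ 2 (em ε), ⟪x, VL y⟫ = ⟪WL x, y⟫ := by
    intro x y
    rw [inner_eq, inner_eq]
    calc ∫ t, x t * (VL y) t ∂(em ε)
        = ∫ t, Vf (a 0) (⇑y) t * x t ∂(em ε) := by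
          refine integral_congr_ae ?_
          filter_upwards [hVLcoe y] with t e1
          rw [e1]; ring
      _ = ∫ τ, y τ * Wf (a 0) ε (⇑x) τ ∂(em ε) :=
          fubini_adjoint hε (Lp.memLp y) (Lp.memLp x)
      _ = ∫ τ, (WL x) τ * y τ ∂(em ε) := by
          refine integral_congr_ae ?_
          filter_upwards [hWLcoe x] with τ e1
          rw [e1]; ring
  -- norm bound for B
  have hBnorm : ∀ (h : Lp ℝ 2 (em ε)) (s : ℕ),
      ‖B h s‖ ≤ (|d s| + |d s * a 0 - a s| * (ε * Real.exp (|a 0| * ε))) * ‖h‖ := by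
    intro h s
    rw [hBdef]
    calc ‖d s • h + (d s * a 0 - a s) • VL h‖
        ≤ ‖d s • h‖ + ‖(d s * a 0 - a s) • VL h‖ := norm_add_le _ _
      _ = |d s| * ‖h‖ + |d s * a 0 - a s| * ‖VL h‖ := by
          rw [norm_smul, norm_smul, Real.norm_eq_abs, Real.norm_eq_abs]
      _ ≤ |d s| * ‖h‖ + |d s * a 0 - a s| * ((ε * Real.exp (|a 0| * ε)) * ‖h‖) := by
          refine add_le_add_right (mul_le_mul_of_nonneg_left ?_ (abs_nonneg _)) _
          exact norm_VfLp_le hε h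
      _ = (|d s| + |d s * a 0 - a s| * (ε * Real.exp (|a 0| * ε))) * ‖h‖ := by ring
  refine ⟨(2:ℝ) • (innerSL ℝ Glp), ?_, ?_⟩
  · -- differentiability
    rw [hasFDerivAt_iff_isLittleO_nhds_zero]
    have hinnerB : ∀ (h : Lp ℝ 2 (em ε)) (s : ℕ),
        ⟪ψ s, B h s⟫ = d s * ⟪ψ s, h⟫ + (d s * a 0 - a s) * ⟪WL (ψ s), h⟫ := by
      intro h s
      rw [hBdef]
      rw [inner_add_right, real_inner_smul_right, real_inner_smul_right, hFub (ψ s) h]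
    have hLh : ∀ h : Lp ℝ 2 (em ε), ((2:ℝ) • (innerSL ℝ Glp)) h
        = 2*⟪u₀, h⟫ + ∑ s ∈ Finset.Icc 1 N, 2*⟪ψ s, B h s⟫ := by
      intro h
      have e0 : ((2:ℝ) • (innerSL ℝ Glp)) h = 2 * ⟪Glp, h⟫ := by
        simp [ContinuousLinearMap.smul_apply, smul_eq_mul]
      rw [e0, hGlpdef]
      rw [inner_add_left, sum_inner, mul_add, Finset.mul_sum]
      congr 1
      refine Finset.sum_congr rfl fun s hs => ?_
      rw [inner_add_left, real_inner_smul_left, real_inner_smul_left, hinnerB h s]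
    have key : ∀ h : Lp ℝ 2 (em ε),
        ((∫ t in (0:ℝ)..ε, ((u₀ + h) t) ^ 2) +
          ∑ s ∈ Finset.Icc 1 N, ∫ t in (0:ℝ)..ε,
            (φ s t + d s * (u₀ + h) t +
              (d s * a 0 - a s) * ∫ τ in (0:ℝ)..t, Real.exp (a 0 * (t - τ)) * (u₀ + h) τ) ^ 2)
          - ((∫ t in (0:ℝ)..ε, (u₀ t) ^ 2) +
            ∑ s ∈ Finset.Icc 1 N, ∫ t in (0:ℝ)..ε,
              (φ s t + d s * u₀ t +
                (d s * a 0 - a s) * ∫ τ in (0:ℝ)..t, Real.exp (a 0 * (t - τ)) * u₀ τ) ^ 2)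
          - ((2:ℝ) • (innerSL ℝ Glp)) h
        = ‖h‖^2 + ∑ s ∈ Finset.Icc 1 N, ‖B h s‖^2 := by
      intro h
      rw [hΦeq (u₀ + h), hΦeq u₀, hLh h]
      have hsplit : ∀ s ∈ Finset.Icc 1 N,
          φL s + d s • (u₀ + h) + (d s * a 0 - a s) • VL (u₀ + h) = ψ s + B h s := by
        intro s hs
        rw [hVadd u₀ h, hψdef, hBdef]
        simp only [smul_add]
        abel
      rw [Finset.sum_congr rfl (fun s hs => by rw [hsplit s hs, norm_add_sq_real])]
      rw [norm_add_sq_real]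
      rw [Finset.sum_add_distrib, Finset.sum_add_distrib]
      ring
    set C : ℝ := 1 + ∑ s ∈ Finset.Icc 1 N,
        (|d s| + |d s * a 0 - a s| * (ε * Real.exp (|a 0| * ε)))^2 with hCdef
    have hbound : ∀ h : Lp ℝ 2 (em ε),
        ‖h‖^2 + ∑ s ∈ Finset.Icc 1 N, ‖B h s‖^2 ≤ C * (‖h‖ * ‖h‖) := by
      intro h
      have h1 : ∀ s ∈ Finset.Icc 1 N,
          ‖B h s‖^2 ≤ (|d s| + |d s * a 0 - a s| * (ε * Real.exp (|a 0| * ε)))^2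
            * (‖h‖ * ‖h‖) := by
        intro s _
        calc ‖B h s‖^2
            ≤ ((|d s| + |d s * a 0 - a s| * (ε * Real.exp (|a 0| * ε))) * ‖h‖)^2 :=
              pow_le_pow_left₀ (norm_nonneg _) (hBnorm h s) 2
          _ = (|d s| + |d s * a 0 - a s| * (ε * Real.exp (|a 0| * ε)))^2 * (‖h‖ * ‖h‖) := by
              ring
      calc ‖h‖^2 + ∑ s ∈ Finset.Icc 1 N, ‖B h s‖^2
          ≤ ‖h‖ * ‖h‖ + ∑ s ∈ Finset.Icc 1 N,
              (|d s| + |d s * a 0 - a s| * (ε * Real.exp (|a 0| * ε)))^2 * (‖h‖ * ‖h‖) :=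
            add_le_add (by rw [sq]) (Finset.sum_le_sum h1)
        _ = C * (‖h‖ * ‖h‖) := by
            rw [hCdef, ← Finset.sum_mul]
            ring
    have hlo : (fun h : Lp ℝ 2 (em ε) => ‖h‖ * ‖h‖) =o[nhds 0] (fun h => h) := by
      rw [Asymptotics.isLittleO_iff]
      intro c hc
      filter_upwards [Metric.ball_mem_nhds (0 : Lp ℝ 2 (em ε)) hc] with x hx
      rw [Real.norm_eq_abs, abs_of_nonneg (mul_nonneg (norm_nonneg _) (norm_nonneg _))]
      have hxc : ‖x‖ < c := by rwa [Metric.mem_ball, dist_zero_right] at hx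
      exact mul_le_mul_of_nonneg_right hxc.le (norm_nonneg _)
    have hBO : (fun h : Lp ℝ 2 (em ε) => ‖h‖^2 + ∑ s ∈ Finset.Icc 1 N, ‖B h s‖^2)
        =O[nhds 0] (fun h => ‖h‖ * ‖h‖) := by
      rw [Asymptotics.isBigO_iff]
      refine ⟨C, Filter.Eventually.of_forall fun h => ?_⟩
      have hnn : (0:ℝ) ≤ ‖h‖^2 + ∑ s ∈ Finset.Icc 1 N, ‖B h s‖^2 := by positivity
      rw [Real.norm_eq_abs, abs_of_nonneg hnn, Real.norm_eq_abs,
        abs_of_nonneg (mul_nonneg (norm_nonneg _) (norm_nonneg _))]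
      exact hbound h
    exact (hBO.trans_isLittleO hlo).congr'
      (Filter.Eventually.of_forall fun h => (key h).symm) (Filter.EventuallyEq.refl _ _)
  · -- formula for the derivative
    intro h
    have e0 : ((2:ℝ) • (innerSL ℝ Glp)) h = 2 * ⟪Glp, h⟫ := by
      simp [ContinuousLinearMap.smul_apply, smul_eq_mul]
    rw [e0, integral_interval_eq_em hε, inner_eq]
    congr 1
    refine (integral_congr_ae ?_).symm
    have hWlin : ∀ s ∈ Finset.Icc 1 N, ∀ᵐ t ∂(em ε),
        Wf (a 0) ε ⇑(ψ s) t
          = Wf (a 0) ε (φ s) t + d s * Wf (a 0) ε (⇑u₀) t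
            + (d s * a 0 - a s) * Wf (a 0) ε (Vf (a 0) (⇑u₀)) t := by
      intro s hs
      have hφi : IntegrableOn (φ s) (Set.Ioo 0 ε) volume := (hφ s hs).integrable one_le_two
      have hVi : IntegrableOn (Vf (a 0) (⇑u₀)) (Set.Ioo 0 ε) volume := Vf_integrableOn hε hui
      filter_upwards [ae_restrict_mem measurableSet_Ioo] with t ht
      have e1 : Wf (a 0) ε ⇑(ψ s) t = Wf (a 0) ε
          (fun τ => (φ s τ + d s * u₀ τ) + (d s * a 0 - a s) * Vf (a 0) (⇑u₀) τ) t :=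
        Wf_congr (hψcoe s hs) ht.1.le ht.2.le
      have e2 := Wf_add (a0 := a 0) (g := fun τ => φ s τ + d s * u₀ τ)
        (g' := fun τ => (d s * a 0 - a s) * Vf (a 0) (⇑u₀) τ)
        (hφi.add (hui.const_mul _)) (hVi.const_mul _) ht.1.le ht.2.le
      have e3 := Wf_add (a0 := a 0) (g := fun τ => φ s τ)
        (g' := fun τ => d s * u₀ τ) hφi (hui.const_mul _) ht.1.le ht.2.le
      have e4 := Wf_smul (a0 := a 0) (ε := ε) (g := ⇑u₀) (d s) t
      have e5 := Wf_smul (a0 := a 0) (ε := ε) (g := Vf (a 0) (⇑u₀)) (d s * a 0 - a s) t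
      rw [e1, e2, e3, e4, e5]
    have hterm : ∀ s ∈ Finset.Icc 1 N, ∀ᵐ t ∂(em ε),
        (d s • ψ s + (d s * a 0 - a s) • WL (ψ s)) t
          = d s * (φ s t + d s * u₀ t + (d s * a 0 - a s) * Vf (a 0) (⇑u₀) t)
            + (d s * a 0 - a s) * (Wf (a 0) ε (φ s) t + d s * Wf (a 0) ε (⇑u₀) t
              + (d s * a 0 - a s) * Wf (a 0) ε (Vf (a 0) (⇑u₀)) t) := by
      intro s hs
      filter_upwards [Lp.coeFn_add (d s • ψ s) ((d s * a 0 - a s) • WL (ψ s)),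
        Lp.coeFn_smul (d s) (ψ s), Lp.coeFn_smul (d s * a 0 - a s) (WL (ψ s)),
        hψcoe s hs, hWLcoe (ψ s), hWlin s hs] with t e1 e2 e3 e4 e5 e6
      rw [e1, Pi.add_apply, e2, e3, Pi.smul_apply, Pi.smul_apply, smul_eq_mul, smul_eq_mul,
        e4, e5, e6]
    have hall := (Filter.eventually_all_finset (Finset.Icc 1 N)).mpr hterm
    filter_upwards [Lp.coeFn_add u₀
        (∑ s ∈ Finset.Icc 1 N, (d s • ψ s + (d s * a 0 - a s) • WL (ψ s))),
      coeFn_sum (Finset.Icc 1 N) (fun s => d s • ψ s + (d s * a 0 - a s) • WL (ψ s)), hall]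
      with t e1 e2 e3
    have egoal : G t = Glp t := by
      rw [hG t, hGlpdef, e1, Pi.add_apply, e2,
        Finset.sum_congr rfl (fun s hs => e3 s hs)]
      exact alg_helper N d (fun k => d k * a 0 - a k) (u₀ t) (Vf (a 0) (⇑u₀) t)
        (Wf (a 0) ε (⇑u₀) t) (Wf (a 0) ε (Vf (a 0) (⇑u₀)) t) (fun k => φ k t)
        (fun k => Wf (a 0) ε (φ k) t)
    rw [egoal]

end MAINTHM
end
end
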